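/- Let S be a string of length n over a finite alphabet. If the minimal period of S satisfies π(S) < n/2, then the length of the maximal unbordered factor of S equals the minimal period: b(S) = π(S). -/

import Mathlib

open List Finset Filter

/-- `S` is unbordered: it has no nonempty proper prefix that is also a suffix. -/
def Unbordered {α : Type*} (S : List α) : Prop :=
  ∀ B : List α, B ≠ [] → B.length < S.length → B <+: S → ¬ B <:+ S

/-- The length of the maximal unbordered factor of `S`. -/
noncomputable def muf {α : Type*} (S : List α) : ℕ :=
  sSup {k | ∃ F : List α, F <:+: S ∧ Unbordered F ∧ F.length = k}


/-- `p` is a period of `S` : `0 < p` and `S[i] = S[i+p]` whenever both are defined. -/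
def IsPeriod {α : Type*} (S : List α) (p : ℕ) : Prop :=
  0 < p ∧ ∀ i : ℕ, (h : i + p < S.length) → S.get ⟨i, by omega⟩ = S.get ⟨i + p, h⟩

/-- The minimal period of `S`. -/
noncomputable def minPeriod {α : Type*} (S : List α) : ℕ :=
  sInf {p | IsPeriod S p}

section lexLemmas
variable {β : Type*} [LinearOrder β]

lemma lex_append {x y : List β} (hl : x.length = y.length)
    (h : List.Lex (· < ·) x y) : ∀ z w : List β, List.Lex (· < ·) (x ++ z) (y ++ w) := by
  induction x generalizing y with
  | nil =>
    cases y with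
    | nil => exact absurd h (by intro hh; cases hh)
    | cons b ys => simp at hl
  | cons a xs ih =>
    cases y with
    | nil => simp at hl
    | cons b ys =>
      intro z w
      cases h with
      | rel hab => exact List.Lex.rel hab
      | cons h' => exact List.Lex.cons (ih (by simpa using hl) h' z w)

lemma lex_of_append_lex {b x y : List β}
    (h : List.Lex (· < ·) (b ++ x) (b ++ y)) : List.Lex (· < ·) x y := by
  induction b with
  | nil => simpa using h
  | cons a bs ih =>
    cases h with
    | rel hab => exact absurd hab (lt_irrefl a)
    | cons h' => exact ih h'

lemma lt_append_of_lt {x y : List β} (hl : x.length = y.length) (h : x < y)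
    (z w : List β) : x ++ z < y ++ w :=
  lex_append hl h z w

lemma lt_of_append_lt {b x y : List β} (h : b ++ x < b ++ y) : x < y :=
  lex_of_append_lex h

end lexLemmas

section periods
variable {α : Type*}

/-- plain `getElem` version of being a period (without positivity). -/
def PeriodAt (S : List α) (q : ℕ) : Prop :=
  ∀ i : ℕ, (h : i + q < S.length) → S[i] = S[i + q]

lemma isPeriod_iff {S : List α} {p : ℕ} : IsPeriod S p ↔ 0 < p ∧ PeriodAt S p := by
  unfold IsPeriod PeriodAt
  simp only [List.get_eq_getElem]

lemma periodAt_of_border {S B : List α} (hpre : B <+: S) (hsuf : B <:+ S)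
    (hlt : B.length < S.length) : PeriodAt S (S.length - B.length) := by
  have hB1 : B = S.take B.length := prefix_iff_eq_take.mp hpre
  have hB2 : B = S.drop (S.length - B.length) := suffix_iff_eq_drop.mp hsuf
  have heq : S.take B.length = S.drop (S.length - B.length) := hB1 ▸ hB2
  intro i hi
  have hik : i < B.length := by omega
  have h1 : (S.take B.length)[i]'(by simp; omega) = S[i]'(by omega) := List.getElem_take
  have h2 : (S.drop (S.length - B.length))[i]'(by simp; omega)
      = S[(S.length - B.length) + i]'(by omega) := List.getElem_drop
  have h3 : S[i]'(by omega) = S[(S.length - B.length) + i]'(by omega) := by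
    rw [← h1, ← h2]
    exact List.getElem_of_eq heq _
  have e : (S.length - B.length) + i = i + (S.length - B.length) := by omega
  rw [h3]
  congr 1

lemma take_eq_drop_of_periodAt {S : List α} {q : ℕ} (hq : PeriodAt S q) (hle : q ≤ S.length) :
    S.take (S.length - q) = S.drop q := by
  apply List.ext_getElem (by simp)
  intro i h1 h2
  simp only [length_take, length_drop] at h1 h2
  have e1 : (S.take (S.length - q))[i]'(by simp; omega) = S[i]'(by omega) := List.getElem_take
  have e2 : (S.drop q)[i]'(by simp; omega) = S[q + i]'(by omega) := List.getElem_drop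
  rw [e1, e2]
  have e : q + i = i + q := by omega
  rw [show S[q+i]'(by omega) = S[i+q]'(by omega) from by congr 1]
  exact hq i (by omega)

lemma not_unbordered_of_periodAt {S : List α} {q : ℕ} (hq : PeriodAt S q) (h0 : 0 < q)
    (hlt : q < S.length) : ¬ Unbordered S := by
  intro hU
  have hts := take_eq_drop_of_periodAt hq (le_of_lt hlt)
  refine hU (S.take (S.length - q)) ?_ (by simp; omega) (take_prefix _ _) ?_
  · exact List.ne_nil_of_length_pos (by simp; omega)
  · rw [hts]; exact drop_suffix _ _

lemma periodAt_infix {S F : List α} {q : ℕ} (hq : PeriodAt S q) (hF : F <:+: S) :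
    PeriodAt F q := by
  obtain ⟨t, s, rfl⟩ := hF
  intro i hi
  have hlen : t.length + F.length ≤ (t ++ F ++ s).length := by simp
  have key : ∀ j : ℕ, (hj : j < F.length) →
      F[j] = (t ++ F ++ s)[t.length + j]'(by simp; omega) := by
    intro j hj
    rw [List.getElem_append_left (by simp; omega) (h' := by simp; omega),
      List.getElem_append_right (by omega)]
    congr 1
    omega
  rw [key i (by omega), key (i + q) hi]
  have := hq (t.length + i) (by simp at hi ⊢; omega)
  rw [this]
  congr 1
  omega

lemma nil_unbordered : Unbordered ([] : List α) := by
  intro B h1 h2 h3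
  simp at h2

lemma muf_set_nonempty (S : List α) :
    Set.Nonempty {k | ∃ F : List α, F <:+: S ∧ Unbordered F ∧ F.length = k} :=
  ⟨0, [], ⟨[], S, by simp⟩, nil_unbordered, rfl⟩

lemma muf_set_bddAbove (S : List α) :
    BddAbove {k | ∃ F : List α, F <:+: S ∧ Unbordered F ∧ F.length = k} := by
  refine ⟨S.length, ?_⟩
  rintro k ⟨F, hF, _, rfl⟩
  exact hF.length_le

lemma isPeriod_length {S : List α} (h : S ≠ []) : IsPeriod S S.length := by
  refine ⟨List.length_pos_iff.mpr h, fun i hi => absurd hi (by omega)⟩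

lemma minPeriod_isPeriod {S : List α} (h : S ≠ []) : IsPeriod S (minPeriod S) := by
  have hm : S.length ∈ {p | IsPeriod S p} := isPeriod_length h
  exact Nat.sInf_mem ⟨S.length, hm⟩

lemma muf_le_minPeriod {S : List α} (h : S ≠ []) : muf S ≤ minPeriod S := by
  obtain ⟨hpos, hper⟩ := isPeriod_iff.mp (minPeriod_isPeriod h)
  apply csSup_le (muf_set_nonempty S)
  rintro k ⟨F, hinf, hunb, rfl⟩
  by_contra hlt
  push_neg at hlt
  exact not_unbordered_of_periodAt (periodAt_infix hper hinf) hpos hlt hunb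

end periods

section lowerBound
variable {β : Type*} [LinearOrder β]

lemma getElem_mod_of_periodAt {α : Type*} {S : List α} {p : ℕ} (hp : PeriodAt S p) (h0 : 0 < p) :
    ∀ i : ℕ, (h : i < S.length) → S[i] = S[i % p]'(by exact lt_of_le_of_lt (Nat.mod_le i p) h) := by
  intro i
  induction i using Nat.strong_induction_on with
  | _ i ih =>
    intro h
    by_cases hip : i < p
    · have e : i % p = i := Nat.mod_eq_of_lt hip
      congr 1
      omega
    · push_neg at hip
      have h1 : S[i - p]'(by omega) = S[(i - p) + p]'(by omega) := hp (i - p) (by omega)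
      have h2 : (i - p) + p = i := by omega
      have h3 : S[i] = S[i - p]'(by omega) := by rw [h1]; congr 1; omega
      rw [h3, ih (i - p) (by omega) (by omega)]
      congr 1
      exact (Nat.mod_eq_sub_mod hip).symm

lemma take_two_mul {α : Type*} {S : List α} {p : ℕ} (hp : PeriodAt S p) (h2 : 2 * p ≤ S.length) :
    S.take (2 * p) = S.take p ++ S.take p := by
  apply List.ext_getElem (by simp; omega)
  intro i h1 h2'
  have hi2 : i < 2 * p := by simp at h1; omega
  have e1 : (S.take (2*p))[i]'h1 = S[i]'(by omega) := List.getElem_take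
  rw [e1]
  by_cases hip : i < p
  · rw [List.getElem_append_left (by simp; omega)]
    exact (List.getElem_take).symm
  · push_neg at hip
    rw [List.getElem_append_right (by simp; omega)]
    have hl : (S.take p).length = p := by simp; omega
    have e2 : (S.take p)[i - (S.take p).length]'(by simp; omega) = S[i - p]'(by omega) := by
      simp only [hl]
      exact List.getElem_take
    rw [e2]
    have := hp (i - p) (by omega)
    rw [this]
    congr 1
    omega

lemma rotate_eq_self_periodAt {α : Type*} {S : List α} {p j : ℕ} (hp : PeriodAt S p)
    (hpn : p ≤ S.length) (hj : 0 < j) (hjp : j < p)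
    (hrot : (S.take p).rotate j = S.take p) : PeriodAt S j := by
  have hp0 : 0 < p := by omega
  have hplen : (S.take p).length = p := by simp; omega
  -- cyclic invariance on P := S.take p
  have key : ∀ m : ℕ, (hm : m < p) →
      (S.take p)[m]'(by omega) = (S.take p)[(m + j) % p]'(by rw [hplen]; exact Nat.mod_lt _ hp0) := by
    intro m hm
    have e0 : (S.take p)[m]'(by simp only [length_take]; omega)
        = ((S.take p).rotate j)[m]'(by simp only [length_rotate, length_take]; omega) :=
      (List.getElem_of_eq hrot (by simp only [length_rotate, length_take]; omega)).symm
    rw [e0]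
    have := List.get_rotate (S.take p) j ⟨m, by simp only [length_rotate, hplen]; omega⟩
    simp only [List.get_eq_getElem] at this
    rw [this]
    congr 1 <;> rw [hplen]
  have hSP : ∀ m : ℕ, (hm : m < p) → S[m]'(by omega) = (S.take p)[m]'(by omega) :=
    fun m hm => (List.getElem_take).symm
  intro i hi
  have hin : i < S.length := by omega
  have e1 := getElem_mod_of_periodAt hp hp0 i hin
  have e2 := getElem_mod_of_periodAt hp hp0 (i + j) hi
  rw [e1, e2, hSP _ (Nat.mod_lt _ hp0), hSP _ (Nat.mod_lt _ hp0)]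
  rw [key (i % p) (Nat.mod_lt _ hp0)]
  congr 1
  rw [Nat.mod_add_mod]


lemma exists_unbordered_rotation {P : List β} (hP : P ≠ [])
    (hprim : ∀ j, 0 < j → j < P.length → P.rotate j ≠ P) :
    ∃ r, r < P.length ∧ Unbordered (P.rotate r) := by
  classical
  set p := P.length with hpdef
  have hp0 : 0 < p := List.length_pos_iff.mpr hP
  -- minimal rotation
  obtain ⟨r, hrmem, hrmin⟩ := Finset.exists_min_image (Finset.range p)
    (fun j => P.rotate j) ⟨0, Finset.mem_range.mpr hp0⟩
  rw [Finset.mem_range] at hrmem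
  set v := P.rotate r with hvdef
  have hvlen : v.length = p := List.length_rotate _ _
  have hvle : ∀ j, v ≤ v.rotate j := by
    intro j
    rw [hvdef, List.rotate_rotate]
    calc P.rotate r ≤ P.rotate ((r + j) % p) :=
          hrmin ((r + j) % p) (Finset.mem_range.mpr (Nat.mod_lt _ hp0))
      _ = P.rotate (r + j) := List.rotate_mod _ _
  have hvne : ∀ j, 0 < j → j < p → v.rotate j ≠ v := by
    intro j hj hjp heq
    rw [hvdef, List.rotate_rotate] at heq
    have h2 : (P.rotate (r + j)).rotate (p - r) = (P.rotate r).rotate (p - r) := by rw [heq]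
    rw [List.rotate_rotate, List.rotate_rotate] at h2
    have e1 : r + j + (p - r) = p + j := by omega
    have e2 : r + (p - r) = p := by omega
    rw [e1, e2, List.rotate_length] at h2
    have e3 : P.rotate (p + j) = P.rotate j := by
      rw [show p + j = p + j from rfl, ← List.rotate_rotate, List.rotate_length]
    rw [e3] at h2
    exact hprim j hj hjp h2
  refine ⟨r, hrmem, ?_⟩
  rw [← hvdef]
  by_contra hnu
  unfold Unbordered at hnu
  push_neg at hnu
  obtain ⟨B, hBne, hBlt, hBpre, hBsuf⟩ := hnu
  -- the set of border lengths of v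
  set Bset : Set ℕ := {k | 0 < k ∧ k < p ∧ v.take k = v.drop (p - k)} with hBset
  have hBmem : B.length ∈ Bset := by
    refine ⟨List.length_pos_iff.mpr hBne, by omega, ?_⟩
    have h1 := prefix_iff_eq_take.mp hBpre
    have h2 := suffix_iff_eq_drop.mp hBsuf
    rw [hvlen] at h2
    rw [← h1, ← h2]
  set k := sInf Bset with hkdef
  obtain ⟨hk0, hkp, hkbd⟩ : k ∈ Bset := Nat.sInf_mem ⟨_, hBmem⟩
  -- v has period p - k
  have hvper : PeriodAt v (p - k) := by
    have := periodAt_of_border (B := v.take k) (take_prefix _ _)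
      (hkbd ▸ drop_suffix _ _) (by simp [hvlen]; omega)
    rwa [hvlen, length_take, hvlen, Nat.min_eq_left (by omega)] at this
  -- k is at most p - k (else a shorter border exists)
  have hkle : k ≤ p - k := by
    by_contra hgt
    push_neg at hgt
    have hdper : PeriodAt v (2 * (p - k)) := by
      intro i hi
      rw [hvlen] at hi
      have s1 : v[i]'(by omega) = v[i + (p - k)]'(by omega) := hvper i (by omega)
      have s2 : v[i + (p - k)]'(by omega) = v[i + (p - k) + (p - k)]'(by omega) :=
        hvper (i + (p - k)) (by omega)
      rw [s1, s2]
      congr 1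
      omega
    have hsmall : (2 * k - p) ∈ Bset := by
      refine ⟨by omega, by omega, ?_⟩
      have := take_eq_drop_of_periodAt hdper (by omega)
      rw [hvlen] at this
      rw [show p - (2 * k - p) = 2 * (p - k) by omega, show 2 * k - p = p - 2 * (p - k) by omega]
      exact this
    have := Nat.sInf_le hsmall
    omega
  -- decomposition v = (b ++ c) ++ b with b = v.take k, c = (v.drop k).take (p - 2*k)
  have hsplit : v.drop k = (v.drop k).take (p - 2 * k) ++ v.drop (p - k) := by
    conv_lhs => rw [← List.take_append_drop (p - 2 * k) (v.drop k)]
    rw [List.drop_drop]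
    congr 2
    omega
  have hdec : v = (v.take k ++ (v.drop k).take (p - 2 * k)) ++ v.take k := by
    conv_lhs => rw [← List.take_append_drop k v, hsplit, ← hkbd]
    simp only [List.append_assoc]
  have hrot1 : v.rotate k = ((v.drop k).take (p - 2 * k) ++ v.take k) ++ v.take k := by
    rw [List.rotate_eq_drop_append_take (by omega)]
    conv_lhs => rw [hsplit, ← hkbd]
  have htk : v.take (p - k) = v.take k ++ (v.drop k).take (p - 2 * k) := by
    conv_lhs => rw [hdec]
    rw [show p - k = (v.take k ++ (v.drop k).take (p - 2 * k)).length by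
      simp [hvlen]; omega]
    exact List.take_left
  have hrot2 : v.rotate (p - k) =
      v.take k ++ (v.take k ++ (v.drop k).take (p - 2 * k)) := by
    rw [List.rotate_eq_drop_append_take (by omega), ← hkbd, htk]
  have h1 : v < v.rotate k :=
    lt_of_le_of_ne (hvle k) (Ne.symm (hvne k hk0 hkp))
  have h2 : v < v.rotate (p - k) :=
    lt_of_le_of_ne (hvle (p - k)) (Ne.symm (hvne (p - k) (by omega) (by omega)))
  rw [hrot1] at h1
  rw [hrot2] at h2
  conv_lhs at h1 => rw [hdec]
  conv_lhs at h2 => rw [hdec]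
  rw [List.append_assoc] at h2
  have h3 : (v.drop k).take (p - 2 * k) ++ v.take k
      < v.take k ++ (v.drop k).take (p - 2 * k) := lt_of_append_lt h2
  have h4 : ((v.drop k).take (p - 2 * k) ++ v.take k) ++ v.take k
      < (v.take k ++ (v.drop k).take (p - 2 * k)) ++ v.take k :=
    lt_append_of_lt (by simp [hvlen]; omega) h3 _ _
  exact absurd h4 (not_lt.mpr (le_of_lt h1))


lemma minPeriod_le_muf {S : List β} (h2 : 2 * minPeriod S < S.length) :
    minPeriod S ≤ muf S := by
  have hne : S ≠ [] := by
    intro h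
    rw [h] at h2
    simp at h2
  obtain ⟨hp0, hper⟩ := isPeriod_iff.mp (minPeriod_isPeriod hne)
  have hmin : ∀ q, IsPeriod S q → minPeriod S ≤ q := fun q hq => Nat.sInf_le hq
  set p := minPeriod S with hp
  set P := S.take p with hP
  have hPlen : P.length = p := by simp [hP]; omega
  have hPne : P ≠ [] := ne_nil_of_length_pos (by omega)
  have hprim : ∀ j, 0 < j → j < P.length → P.rotate j ≠ P := by
    intro j hj hjp hrot
    rw [hPlen] at hjp
    have hpj : PeriodAt S j := rotate_eq_self_periodAt hper (by omega) hj hjp hrot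
    have := hmin j (isPeriod_iff.mpr ⟨hj, hpj⟩)
    omega
  obtain ⟨r, hr, hub⟩ := exists_unbordered_rotation hPne hprim
  rw [hPlen] at hr
  have hPP : P ++ P = S.take (2 * p) := (take_two_mul hper (by omega)).symm
  have hinf1 : P.rotate r <:+: P ++ P := by
    refine ⟨P.take r, P.drop r, ?_⟩
    rw [List.rotate_eq_drop_append_take (by omega)]
    simp only [← List.append_assoc]
    rw [List.take_append_drop, List.append_assoc, List.take_append_drop]
  have hinf : P.rotate r <:+: S := by
    refine hinf1.trans (IsPrefix.isInfix ?_)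
    rw [hPP]
    exact take_prefix _ _
  exact le_csSup (muf_set_bddAbove S) ⟨P.rotate r, hinf, hub, by simp [hPlen]⟩

end lowerBound

section reduction
variable {α γ : Type*}

lemma map_inj_on {f : α → γ} {S : List α}
    (hf : ∀ a ∈ S, ∀ b ∈ S, f a = f b → a = b) :
    ∀ {l₁ l₂ : List α}, (∀ a ∈ l₁, a ∈ S) → (∀ a ∈ l₂, a ∈ S) →
      l₁.map f = l₂.map f → l₁ = l₂ := by
  intro l₁
  induction l₁ with
  | nil =>
    intro l₂ _ _ hmap
    simpa using (List.map_eq_nil_iff.mp hmap.symm).symm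
  | cons a l ih =>
    intro l₂ h₁ h₂ hmap
    cases l₂ with
    | nil => simp at hmap
    | cons b l' =>
      simp only [List.map_cons, List.cons.injEq] at hmap
      have hab : a = b := hf a (h₁ a (by simp)) b (h₂ b (by simp)) hmap.1
      rw [hab, ih (fun x hx => h₁ x (by simp [hx])) (fun x hx => h₂ x (by simp [hx])) hmap.2]

lemma unbordered_map_iff {f : α → γ} {F : List α}
    (hf : ∀ a ∈ F, ∀ b ∈ F, f a = f b → a = b) :
    Unbordered (F.map f) ↔ Unbordered F := by
  constructor
  · intro hU B hne hlt hpre hsuf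
    refine hU (B.map f) (by simpa using hne) (by simpa using hlt)
      (hpre.map f) (hsuf.map f)
  · intro hU B' hne hlt hpre hsuf
    rw [List.length_map] at hlt
    have h1 : B' = (F.map f).take B'.length := prefix_iff_eq_take.mp hpre
    have h2 : B' = (F.map f).drop ((F.map f).length - B'.length) :=
      suffix_iff_eq_drop.mp hsuf
    rw [List.length_map] at h2
    have h3 : (F.take B'.length).map f = (F.drop (F.length - B'.length)).map f := by
      rw [List.map_take, List.map_drop, ← h1, ← h2]
    have h4 : F.take B'.length = F.drop (F.length - B'.length) :=
      map_inj_on hf (fun x hx => List.mem_of_mem_take hx)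
        (fun x hx => List.mem_of_mem_drop hx) h3
    have hBlen : 0 < B'.length := List.length_pos_iff.mpr hne
    refine hU (F.take B'.length) (ne_nil_of_length_pos (by simp; omega))
      (by simp; omega) (take_prefix _ _) ?_
    rw [h4]
    exact drop_suffix _ _

lemma minPeriod_map {f : α → γ} {S : List α}
    (hf : ∀ a ∈ S, ∀ b ∈ S, f a = f b → a = b) :
    minPeriod (S.map f) = minPeriod S := by
  unfold minPeriod
  congr 1
  ext q
  simp only [Set.mem_setOf_eq, isPeriod_iff]
  constructor
  · rintro ⟨hq, hper⟩
    refine ⟨hq, fun i hi => ?_⟩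
    have := hper i (by simpa using hi)
    rw [List.getElem_map, List.getElem_map] at this
    exact hf _ (List.getElem_mem _) _ (List.getElem_mem _) this
  · rintro ⟨hq, hper⟩
    refine ⟨hq, fun i hi => ?_⟩
    rw [List.length_map] at hi
    rw [List.getElem_map, List.getElem_map]
    exact congrArg f (hper i hi)

lemma muf_map {f : α → γ} {S : List α}
    (hf : ∀ a ∈ S, ∀ b ∈ S, f a = f b → a = b) :
    muf (S.map f) = muf S := by
  unfold muf
  congr 1
  ext k
  simp only [Set.mem_setOf_eq]
  constructor
  · rintro ⟨F', hinf', hub', rfl⟩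
    obtain ⟨t, u, heq⟩ := hinf'
    set F : List α := (S.drop t.length).take F'.length with hF
    have hmapF : F.map f = F' := by
      rw [hF, List.map_take, List.map_drop, ← heq]
      rw [List.append_assoc, List.drop_left, List.take_left]
    have hFinf : F <:+: S :=
      (take_prefix _ _).isInfix.trans (drop_suffix _ _).isInfix
    have hFmem : ∀ a ∈ F, a ∈ S := fun a ha => hFinf.subset ha
    have hFlen : F.length = F'.length := by rw [← hmapF, List.length_map]
    refine ⟨F, hFinf, ?_, hFlen⟩
    rw [← unbordered_map_iff (fun a ha b hb => hf a (hFmem a ha) b (hFmem b hb)), hmapF]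
    exact hub'
  · rintro ⟨F, hinf, hub, rfl⟩
    have hFmem : ∀ a ∈ F, a ∈ S := fun a ha => hinf.subset ha
    exact ⟨F.map f, hinf.map f,
      (unbordered_map_iff (fun a ha b hb => hf a (hFmem a ha) b (hFmem b hb))).mpr hub,
      List.length_map _⟩

end reduction

theorem muf_eq_minPeriod_of_small_period {α : Type*} (S : List α)
    (h : (minPeriod S : ℝ) < (S.length : ℝ) / 2) : muf S = minPeriod S := by
  classical
  have h2 : 2 * minPeriod S < S.length := by
    rw [lt_div_iff₀ (by norm_num : (0:ℝ) < 2)] at h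
    exact_mod_cast (by linarith : (2:ℝ) * (minPeriod S : ℝ) < (S.length : ℝ))
  have hne : S ≠ [] := by
    intro hs
    rw [hs] at h2
    simp at h2
  set f : α → ℕ := fun a => S.idxOf a with hf
  have hinj : ∀ a ∈ S, ∀ b ∈ S, f a = f b → a = b := fun a ha b hb hab =>
    (List.idxOf_inj ha).mp hab
  have e1 := minPeriod_map hinj
  have e2 := muf_map hinj
  have h2' : 2 * minPeriod (S.map f) < (S.map f).length := by
    rw [e1, List.length_map]
    exact h2
  have low := minPeriod_le_muf h2'
  rw [e1, e2] at low
  exact le_antisymm (muf_le_minPeriod hne) low
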